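/- arXiv:1011.1518 — 2 statements merged into one kernel-verified Lean document; each statement's English description precedes it below -/
import Mathlib

section
/- Let ‖·‖_{♭(ρ)} be the dual norm of ‖M‖_{♯(ρ)} := max{ρ‖M‖_{1→1}, ρ^{-1}‖M‖_{∞→∞}} with respect to the trace inner product ⟨A,B⟩ = tr(AᵀB). Then for any matrix M ∈ ℝ^{m×n} and ρ > 0, ‖M‖_{♭(ρ)} ≤ ‖M‖_*, where ‖M‖_* is the trace (nuclear) norm. -/
open scoped BigOperators
open Matrix
noncomputable section

namespace SLR

/-- Trace inner product `⟨A,B⟩ = tr(AᵀB)`. -/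
def inner' {m n : ℕ} (A B : Matrix (Fin m) (Fin n) ℝ) : ℝ := ∑ i, ∑ j, A i j * B i j

/-- Entrywise 1-norm. -/
def l1 {m n : ℕ} (M : Matrix (Fin m) (Fin n) ℝ) : ℝ := ∑ i, ∑ j, |M i j|

/-- Entrywise ∞-norm (maximum absolute value of an entry). -/
def linf {m n : ℕ} (M : Matrix (Fin m) (Fin n) ℝ) : ℝ := ⨆ i, ⨆ j, |M i j|

/-- Frobenius norm. -/
def frob {m n : ℕ} (M : Matrix (Fin m) (Fin n) ℝ) : ℝ :=
  Real.sqrt (∑ i, ∑ j, (M i j) ^ 2)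

/-- `‖M‖_{1→1}`: maximum column absolute sum. -/
def n11 {m n : ℕ} (M : Matrix (Fin m) (Fin n) ℝ) : ℝ := ⨆ j, ∑ i, |M i j|

/-- `‖M‖_{∞→∞}`: maximum row absolute sum. -/
def nII {m n : ℕ} (M : Matrix (Fin m) (Fin n) ℝ) : ℝ := ⨆ i, ∑ j, |M i j|

/-- Spectral norm `‖M‖_{2→2}`. -/
def spec {m n : ℕ} (M : Matrix (Fin m) (Fin n) ℝ) : ℝ :=
  ‖LinearMap.toContinuousLinearMap (Matrix.toEuclideanLin M)‖

/-- Trace (nuclear) norm: sum of singular values. -/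
def traceNorm {m n : ℕ} (M : Matrix (Fin m) (Fin n) ℝ) : ℝ :=
  ∑ i, Real.sqrt ((Matrix.isHermitian_conjTranspose_mul_self M).eigenvalues i)

/-- The hybrid norm `‖M‖_{♯(ρ)} = max{ρ‖M‖_{1→1}, ρ⁻¹‖M‖_{∞→∞}}`. -/
def sharp {m n : ℕ} (ρ : ℝ) (M : Matrix (Fin m) (Fin n) ℝ) : ℝ :=
  max (ρ * n11 M) (ρ⁻¹ * nII M)

/-- The dual norm `‖·‖_{♭(ρ)}` of `‖·‖_{♯(ρ)}`. -/
def flat {m n : ℕ} (ρ : ℝ) (M : Matrix (Fin m) (Fin n) ℝ) : ℝ :=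
  sSup {x : ℝ | ∃ N : Matrix (Fin m) (Fin n) ℝ, sharp ρ N ≤ 1 ∧ x = inner' M N}

/-- Induced operator norm of a map `T` with respect to the norm `f`. -/
def opNormWrt {m n : ℕ} (f : Matrix (Fin m) (Fin n) ℝ → ℝ)
    (T : Matrix (Fin m) (Fin n) ℝ → Matrix (Fin m) (Fin n) ℝ) : ℝ :=
  sSup {x : ℝ | ∃ M, f M ≤ 1 ∧ x = f (T M)}

/-- Entrywise sign matrix. -/
def signM {m n : ℕ} (M : Matrix (Fin m) (Fin n) ℝ) : Matrix (Fin m) (Fin n) ℝ :=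
  Matrix.of fun i j => Real.sign (M i j)

/-- Orthogonal projection onto matrices supported on `supp X`. -/
def POmega {m n : ℕ} (X : Matrix (Fin m) (Fin n) ℝ) (M : Matrix (Fin m) (Fin n) ℝ) :
    Matrix (Fin m) (Fin n) ℝ :=
  Matrix.of fun i j => if X i j ≠ 0 then M i j else 0

/-- Orthogonal projection onto the tangent space `T` determined by `U`, `V`. -/
def PT {m n r : ℕ} (U : Matrix (Fin m) (Fin r) ℝ) (V : Matrix (Fin n) (Fin r) ℝ)
    (M : Matrix (Fin m) (Fin n) ℝ) : Matrix (Fin m) (Fin n) ℝ :=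
  U * Uᵀ * M + M * (V * Vᵀ) - U * Uᵀ * M * (V * Vᵀ)

/-- `‖U‖_{2→∞}`: maximum row Euclidean norm. -/
def two2inf {m r : ℕ} (U : Matrix (Fin m) (Fin r) ℝ) : ℝ :=
  ⨆ i, Real.sqrt (∑ k, (U i k) ^ 2)

/-- The sparsity measure `α(ρ)` of `X̄_S`. -/
def alpha {m n : ℕ} (X : Matrix (Fin m) (Fin n) ℝ) (ρ : ℝ) : ℝ :=
  max (ρ * n11 (signM X)) (ρ⁻¹ * nII (signM X))

/-- The incoherence measure `β(ρ)` of the singular vectors `U`, `V`. -/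
def beta {m n r : ℕ} (U : Matrix (Fin m) (Fin r) ℝ) (V : Matrix (Fin n) (Fin r) ℝ)
    (ρ : ℝ) : ℝ :=
  ρ⁻¹ * linf (U * Uᵀ) + ρ * linf (V * Vᵀ) + two2inf U * two2inf V

/-- Number of nonzero entries. -/
def suppCard {m n : ℕ} (X : Matrix (Fin m) (Fin n) ℝ) : ℕ :=
  (Finset.univ.filter fun p : Fin m × Fin n => X p.1 p.2 ≠ 0).card

lemma n11_nonneg {m n : ℕ} (N : Matrix (Fin m) (Fin n) ℝ) : 0 ≤ n11 N :=
  Real.iSup_nonneg fun _ => Finset.sum_nonneg fun _ _ => abs_nonneg _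

lemma nII_nonneg {m n : ℕ} (N : Matrix (Fin m) (Fin n) ℝ) : 0 ≤ nII N :=
  Real.iSup_nonneg fun _ => Finset.sum_nonneg fun _ _ => abs_nonneg _

lemma col_le_n11 {m n : ℕ} (N : Matrix (Fin m) (Fin n) ℝ) (j : Fin n) :
    ∑ i, |N i j| ≤ n11 N := by
  exact le_ciSup (f := fun j => ∑ i, |N i j|) (Set.Finite.bddAbove (Set.finite_range _)) j

lemma row_le_nII {m n : ℕ} (N : Matrix (Fin m) (Fin n) ℝ) (i : Fin m) :
    ∑ j, |N i j| ≤ nII N := by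
  exact le_ciSup (f := fun i => ∑ j, |N i j|) (Set.Finite.bddAbove (Set.finite_range _)) i

/-- Key bound: `‖Nx‖₂² ≤ ‖N‖_{1→1} ‖N‖_{∞→∞} ‖x‖₂²`. -/
lemma sum_sq_mulVec_le {m n : ℕ} (N : Matrix (Fin m) (Fin n) ℝ) (x : Fin n → ℝ) :
    ∑ i, (∑ j, N i j * x j) ^ 2 ≤ n11 N * nII N * ∑ j, (x j) ^ 2 := by
  have hrow : ∀ i : Fin m,
      (∑ j, N i j * x j) ^ 2 ≤ (∑ j, |N i j|) * ∑ j, |N i j| * (x j) ^ 2 := by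
    intro i
    calc (∑ j, N i j * x j) ^ 2
        ≤ (∑ j, |N i j| * |x j|) ^ 2 := by
          rw [← sq_abs]
          apply pow_le_pow_left₀ (abs_nonneg _)
          · calc |∑ j, N i j * x j| ≤ ∑ j, |N i j * x j| := Finset.abs_sum_le_sum_abs _ _
              _ = ∑ j, |N i j| * |x j| := by simp [abs_mul]
      _ = (∑ j, Real.sqrt |N i j| * (Real.sqrt |N i j| * |x j|)) ^ 2 := by
          congr 1
          refine Finset.sum_congr rfl fun j _ => ?_
          rw [← mul_assoc, Real.mul_self_sqrt (abs_nonneg _)]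
      _ ≤ (∑ j, Real.sqrt |N i j| ^ 2) * ∑ j, (Real.sqrt |N i j| * |x j|) ^ 2 :=
          Finset.sum_mul_sq_le_sq_mul_sq _ _ _
      _ = (∑ j, |N i j|) * ∑ j, |N i j| * (x j) ^ 2 := by
          congr 1
          · exact Finset.sum_congr rfl fun j _ => Real.sq_sqrt (abs_nonneg _)
          · refine Finset.sum_congr rfl fun j _ => ?_
            rw [mul_pow, Real.sq_sqrt (abs_nonneg _), sq_abs]
  calc ∑ i, (∑ j, N i j * x j) ^ 2
      ≤ ∑ i, (∑ j, |N i j|) * ∑ j, |N i j| * (x j) ^ 2 :=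
        Finset.sum_le_sum fun i _ => hrow i
    _ ≤ ∑ i, nII N * ∑ j, |N i j| * (x j) ^ 2 :=
        Finset.sum_le_sum fun i _ =>
          mul_le_mul_of_nonneg_right (row_le_nII N i)
            (Finset.sum_nonneg fun j _ => mul_nonneg (abs_nonneg _) (sq_nonneg _))
    _ = nII N * ∑ j, (∑ i, |N i j|) * (x j) ^ 2 := by
        rw [← Finset.mul_sum]
        congr 1
        rw [Finset.sum_comm]
        exact Finset.sum_congr rfl fun j _ => (Finset.sum_mul _ _ _).symm
    _ ≤ nII N * ∑ j, n11 N * (x j) ^ 2 := by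
        apply mul_le_mul_of_nonneg_left _ (nII_nonneg N)
        exact Finset.sum_le_sum fun j _ =>
          mul_le_mul_of_nonneg_right (col_le_n11 N j) (sq_nonneg _)
    _ = n11 N * nII N * ∑ j, (x j) ^ 2 := by
        rw [Finset.mul_sum, Finset.mul_sum]
        exact Finset.sum_congr rfl fun j _ => by ring

/-- the dual norm ♭(ρ) is bounded by the trace norm. -/
theorem flat_le_traceNorm {m n : ℕ} (M : Matrix (Fin m) (Fin n) ℝ) (ρ : ℝ) (hρ : 0 < ρ) :
    flat ρ M ≤ traceNorm M := by
  have htn : 0 ≤ traceNorm M := Finset.sum_nonneg fun i _ => Real.sqrt_nonneg _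
  apply Real.sSup_le _ htn
  rintro x ⟨N, hN, rfl⟩
  have hn11 : ρ * n11 N ≤ 1 := le_trans (le_max_left _ _) hN
  have hnII : ρ⁻¹ * nII N ≤ 1 := le_trans (le_max_right _ _) hN
  have hprod : n11 N * nII N ≤ 1 := by
    have heq : n11 N * nII N = (ρ * n11 N) * (ρ⁻¹ * nII N) := by
      field_simp
    rw [heq]
    exact mul_le_one₀ hn11 (mul_nonneg (by positivity) (nII_nonneg N)) hnII
  set hA := Matrix.isHermitian_conjTranspose_mul_self M with hhA
  set V : Matrix (Fin n) (Fin n) ℝ := (hA.eigenvectorUnitary : Matrix (Fin n) (Fin n) ℝ) with hV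
  have hVmem : V ∈ Matrix.unitaryGroup (Fin n) ℝ := hA.eigenvectorUnitary.2
  have hVtV : Vᵀ * V = 1 := by
    have h := (Matrix.mem_unitaryGroup_iff').mp hVmem
    rwa [Matrix.star_eq_conjTranspose, conjTranspose_eq_transpose_of_trivial] at h
  have hVVt : V * Vᵀ = 1 := by
    have h := (Matrix.mem_unitaryGroup_iff).mp hVmem
    rwa [Matrix.star_eq_conjTranspose, conjTranspose_eq_transpose_of_trivial] at h
  have hdiag : Vᵀ * (Mᵀ * M) * V = Matrix.diagonal hA.eigenvalues := by
    have h := hA.conjStarAlgAut_star_eigenvectorUnitary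
    rw [Unitary.conjStarAlgAut_star_apply] at h
    rw [Matrix.star_eq_conjTranspose] at h
    rw [← conjTranspose_eq_transpose_of_trivial M, ← conjTranspose_eq_transpose_of_trivial V]
    exact h
  have hMVcol : ∀ j, ∑ i, ((M * V) i j) ^ 2 = hA.eigenvalues j := by
    intro j
    have h1 : ((M * V)ᵀ * (M * V)) j j = hA.eigenvalues j := by
      rw [Matrix.transpose_mul, show Vᵀ * Mᵀ * (M * V) = Vᵀ * (Mᵀ * M) * V by
        simp only [Matrix.mul_assoc], hdiag, Matrix.diagonal_apply_eq]
    rw [← h1]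
    simp [Matrix.mul_apply, sq, mul_comm]
  have hVcol : ∀ j, ∑ k, (V k j) ^ 2 = 1 := by
    intro j
    have h1 : (Vᵀ * V) j j = 1 := by rw [hVtV]; simp
    rw [← h1]
    simp [Matrix.mul_apply, sq]
  have hNVcol : ∀ j, ∑ i, ((N * V) i j) ^ 2 ≤ 1 := by
    intro j
    have hk := sum_sq_mulVec_le N (fun k => V k j)
    calc ∑ i, ((N * V) i j) ^ 2 = ∑ i, (∑ k, N i k * V k j) ^ 2 := by
          simp [Matrix.mul_apply]
      _ ≤ n11 N * nII N * ∑ k, (V k j) ^ 2 := hk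
      _ = n11 N * nII N := by rw [hVcol j, mul_one]
      _ ≤ 1 := hprod
  have htr : inner' M N = ∑ j, ∑ i, (M * V) i j * (N * V) i j := by
    have h1 : ∑ j, ∑ i, (M * V) i j * (N * V) i j
        = Matrix.trace ((M * V)ᵀ * (N * V)) := by
      simp [Matrix.trace, Matrix.diag, Matrix.mul_apply, mul_comm]
    have h2 : (M * V)ᵀ * (N * V) = Vᵀ * (Mᵀ * N) * V := by
      rw [Matrix.transpose_mul]
      simp only [Matrix.mul_assoc]
    have h3 : Matrix.trace (Vᵀ * (Mᵀ * N) * V) = Matrix.trace (Mᵀ * N) := by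
      rw [Matrix.trace_mul_cycle, ← Matrix.mul_assoc, hVVt, Matrix.one_mul]
    have h4 : inner' M N = Matrix.trace (Mᵀ * N) := by
      simp only [inner', Matrix.trace, Matrix.diag, Matrix.mul_apply,
        Matrix.transpose_apply, Finset.sum_congr]
      rw [Finset.sum_comm]
    rw [h4, h1, h2, h3]
  rw [htr]
  calc ∑ j, ∑ i, (M * V) i j * (N * V) i j
      ≤ ∑ j, Real.sqrt (hA.eigenvalues j) := by
        refine Finset.sum_le_sum fun j _ => ?_
        calc ∑ i, (M * V) i j * (N * V) i j
            ≤ Real.sqrt (∑ i, ((M * V) i j) ^ 2) * Real.sqrt (∑ i, ((N * V) i j) ^ 2) :=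
              Real.sum_mul_le_sqrt_mul_sqrt _ _ _
          _ ≤ Real.sqrt (hA.eigenvalues j) * 1 := by
              rw [hMVcol j]
              refine mul_le_mul_of_nonneg_left ?_ (Real.sqrt_nonneg _)
              calc Real.sqrt (∑ i, ((N * V) i j) ^ 2) ≤ Real.sqrt 1 :=
                    Real.sqrt_le_sqrt (hNVcol j)
                _ = 1 := Real.sqrt_one
          _ = Real.sqrt (hA.eigenvalues j) := mul_one _
    _ = traceNorm M := rfl


end SLR
end
end

section
/- (Approximate-subgradient error decomposition) Fix λ > 0, c > 1, and X̄_S, X̄_L ∈ ℝ^{m×n}, with Ω̄ = Ω(X̄_S), T̄ = T(X̄_L). Suppose Q ∈ ℝ^{m×n} is simultaneously a subgradient of λ‖·‖_{ℓ1} at X̄_S and of the trace norm ‖·‖_* at X̄_L, and satisfies ‖P_{Ω̄⊥}(Q)‖_{ℓ∞} ≤ λ/c and ‖P_{T̄⊥}(Q)‖_{2→2} ≤ 1/c. Then for all X_S, X_L: λ‖X_S‖_{ℓ1} + ‖X_L‖_* − λ‖X̄_S‖_{ℓ1} − ‖X̄_L‖_* ≥ ⟨Q, X_S + X_L − X̄_S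 − X̄_L⟩ + (1 − 1/c)(λ‖P_{Ω̄⊥}(X_S − X̄_S)‖_{ℓ1} + ‖P_{T̄⊥}(X_L − X̄_L)‖_*). -/
open scoped BigOperators
open Matrix
noncomputable section

namespace SLR

namespace Aux
variable {m n r k : ℕ}

/-- Cauchy–Schwarz for finite sums. -/
lemma cs_sum {α : Type*} [Fintype α] (f g : α → ℝ) :
    ∑ i, f i * g i ≤ Real.sqrt (∑ i, f i ^ 2) * Real.sqrt (∑ i, g i ^ 2) := by
  have h := Finset.sum_mul_sq_le_sq_mul_sq Finset.univ f g
  calc ∑ i, f i * g i ≤ |∑ i, f i * g i| := le_abs_self _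
    _ = Real.sqrt ((∑ i, f i * g i) ^ 2) := (Real.sqrt_sq_eq_abs _).symm
    _ ≤ Real.sqrt ((∑ i, f i ^ 2) * ∑ i, g i ^ 2) := Real.sqrt_le_sqrt h
    _ = _ := Real.sqrt_mul (Finset.sum_nonneg fun i _ => sq_nonneg _) _

lemma inner'_eq_trace (A B : Matrix (Fin m) (Fin n) ℝ) :
    inner' A B = (Aᵀ * B).trace := by
  simp only [inner', Matrix.trace, Matrix.diag, Matrix.mul_apply, Matrix.transpose_apply]
  exact Finset.sum_comm

lemma inner'_comm (A B : Matrix (Fin m) (Fin n) ℝ) : inner' A B = inner' B A := by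
  simp only [inner', mul_comm]

lemma inner'_add_right (A B C : Matrix (Fin m) (Fin n) ℝ) :
    inner' A (B + C) = inner' A B + inner' A C := by
  simp [inner', mul_add, Finset.sum_add_distrib]

lemma inner'_sub_right (A B C : Matrix (Fin m) (Fin n) ℝ) :
    inner' A (B - C) = inner' A B - inner' A C := by
  simp [inner', mul_sub, Finset.sum_sub_distrib]

lemma inner'_add_left (A B C : Matrix (Fin m) (Fin n) ℝ) :
    inner' (A + B) C = inner' A C + inner' B C := by
  simp [inner', add_mul, Finset.sum_add_distrib]

lemma inner'_sub_left (A B C : Matrix (Fin m) (Fin n) ℝ) :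
    inner' (A - B) C = inner' A C - inner' B C := by
  simp [inner', sub_mul, Finset.sum_sub_distrib]

lemma inner'_zero_right (A : Matrix (Fin m) (Fin n) ℝ) : inner' A 0 = 0 := by
  simp [inner']

lemma dot_transpose_mulVec (M : Matrix (Fin m) (Fin n) ℝ) (u : Fin m → ℝ) (z : Fin n → ℝ) :
    (Mᵀ *ᵥ u) ⬝ᵥ z = u ⬝ᵥ (M *ᵥ z) := by
  rw [dotProduct_mulVec, Matrix.mulVec_transpose]

lemma sumsq_mulVec (M : Matrix (Fin m) (Fin n) ℝ) (x : Fin n → ℝ) :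
    ∑ i, (M *ᵥ x) i ^ 2 = x ⬝ᵥ ((Mᵀ * M) *ᵥ x) := by
  have h1 : ∑ i, (M *ᵥ x) i ^ 2 = (M *ᵥ x) ⬝ᵥ (M *ᵥ x) := by
    simp [dotProduct, pow_two]
  have h2 : (M *ᵥ x) ⬝ᵥ (M *ᵥ x) = x ⬝ᵥ (Mᵀ *ᵥ (M *ᵥ x)) := by
    have := dot_transpose_mulVec Mᵀ x (M *ᵥ x)
    rw [Matrix.transpose_transpose] at this
    rw [← this]
  rw [h1, h2, Matrix.mulVec_mulVec]


/-- eigenvector matrix of `Bᵀ * B`. -/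
def eigP (B : Matrix (Fin m) (Fin n) ℝ) : Matrix (Fin n) (Fin n) ℝ :=
  ((Matrix.isHermitian_conjTranspose_mul_self B).eigenvectorUnitary : Matrix (Fin n) (Fin n) ℝ)

def eigL (B : Matrix (Fin m) (Fin n) ℝ) : Fin n → ℝ :=
  (Matrix.isHermitian_conjTranspose_mul_self B).eigenvalues

lemma star_eigP (B : Matrix (Fin m) (Fin n) ℝ) :
    star (eigP B) = (eigP B)ᵀ := by
  rw [Matrix.star_eq_conjTranspose, Matrix.conjTranspose_eq_transpose_of_trivial]

lemma eigP_mul_self (B : Matrix (Fin m) (Fin n) ℝ) : (eigP B)ᵀ * eigP B = 1 := by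
  rw [← star_eigP]
  exact Unitary.coe_star_mul_self ((Matrix.isHermitian_conjTranspose_mul_self B).eigenvectorUnitary)

lemma self_mul_eigP (B : Matrix (Fin m) (Fin n) ℝ) : eigP B * (eigP B)ᵀ = 1 := by
  rw [← star_eigP]
  exact Unitary.coe_mul_star_self ((Matrix.isHermitian_conjTranspose_mul_self B).eigenvectorUnitary)

lemma eig_spec (B : Matrix (Fin m) (Fin n) ℝ) :
    Bᵀ * B = eigP B * Matrix.diagonal (eigL B) * (eigP B)ᵀ := by
  have h := (Matrix.isHermitian_conjTranspose_mul_self B).spectral_theorem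
  rw [← star_eigP]
  simpa [RCLike.ofReal_real_eq_id, Function.comp, eigP, eigL] using h

lemma eigL_nonneg (B : Matrix (Fin m) (Fin n) ℝ) (i : Fin n) : 0 ≤ eigL B i := by
  have hpsd : (Bᴴ * B).PosSemidef := by
    exact Matrix.posSemidef_conjTranspose_mul_self B
  exact hpsd.eigenvalues_nonneg i

lemma traceNorm_eq (B : Matrix (Fin m) (Fin n) ℝ) :
    traceNorm B = ∑ i, Real.sqrt (eigL B i) := rfl

/-- columns of a matrix -/
def colm (M : Matrix (Fin m) (Fin n) ℝ) (j : Fin n) : Fin m → ℝ := fun i => M i j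

lemma col_sumsq_eigP (B : Matrix (Fin m) (Fin n) ℝ) (j : Fin n) :
    ∑ i, (colm (eigP B) j) i ^ 2 = 1 := by
  have h := congrArg (fun M => M j j) (eigP_mul_self B)
  simpa [Matrix.mul_apply, Matrix.one_apply, colm, pow_two] using h

lemma col_sumsq_B_eigP (B : Matrix (Fin m) (Fin n) ℝ) (j : Fin n) :
    ∑ i, (B *ᵥ colm (eigP B) j) i ^ 2 = eigL B j := by
  rw [sumsq_mulVec]
  have key : (eigP B)ᵀ * (Bᵀ * B) * eigP B = Matrix.diagonal (eigL B) := by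
    rw [eig_spec B]
    calc (eigP B)ᵀ * (eigP B * Matrix.diagonal (eigL B) * (eigP B)ᵀ) * eigP B
        = ((eigP B)ᵀ * eigP B) * Matrix.diagonal (eigL B) * ((eigP B)ᵀ * eigP B) := by
          noncomm_ring
      _ = Matrix.diagonal (eigL B) := by rw [eigP_mul_self]; simp
  have h2 : colm (eigP B) j ⬝ᵥ ((Bᵀ * B) *ᵥ colm (eigP B) j)
      = ((eigP B)ᵀ * (Bᵀ * B) * eigP B) j j := by
    simp [Matrix.mul_apply, Matrix.mulVec, dotProduct, colm, Finset.mul_sum,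
      Finset.sum_mul, mul_comm, mul_left_comm]
  rw [h2, key]
  simp

/-- contraction property -/
def Cnt (s : ℝ) (A : Matrix (Fin m) (Fin n) ℝ) : Prop :=
  ∀ x : Fin n → ℝ, ∑ i, (A *ᵥ x) i ^ 2 ≤ s ^ 2 * ∑ j, x j ^ 2

lemma cnt_norm_mulVec {s : ℝ} (hs : 0 ≤ s) {A : Matrix (Fin m) (Fin n) ℝ} (hA : Cnt s A)
    (x : Fin n → ℝ) :
    Real.sqrt (∑ i, (A *ᵥ x) i ^ 2) ≤ s * Real.sqrt (∑ j, x j ^ 2) := by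
  have := hA x
  calc Real.sqrt (∑ i, (A *ᵥ x) i ^ 2) ≤ Real.sqrt (s ^ 2 * ∑ j, x j ^ 2) :=
        Real.sqrt_le_sqrt this
    _ = s * Real.sqrt (∑ j, x j ^ 2) := by
        rw [Real.sqrt_mul (sq_nonneg s), Real.sqrt_sq hs]

/-- the key inner product expansion over eigP columns -/
lemma inner'_eq_sum_cols (A B : Matrix (Fin m) (Fin n) ℝ) :
    inner' A B = ∑ j, ∑ i, (A *ᵥ colm (eigP B) j) i * (B *ᵥ colm (eigP B) j) i := by
  have h1 : inner' A B = inner' (A * eigP B) (B * eigP B) := by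
    rw [inner'_eq_trace, inner'_eq_trace]
    calc (Aᵀ * B).trace = (Aᵀ * B * (eigP B * (eigP B)ᵀ)).trace := by
          rw [self_mul_eigP]; simp
      _ = ((Aᵀ * (B * eigP B)) * (eigP B)ᵀ).trace := by simp only [Matrix.mul_assoc]
      _ = ((eigP B)ᵀ * (Aᵀ * (B * eigP B))).trace := (Matrix.trace_mul_comm _ _)
      _ = ((A * eigP B)ᵀ * (B * eigP B)).trace := by
          rw [Matrix.transpose_mul, Matrix.mul_assoc]
  rw [h1]
  simp only [inner']
  rw [Finset.sum_comm]
  refine Finset.sum_congr rfl fun j _ => Finset.sum_congr rfl fun i _ => ?_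
  simp [Matrix.mul_apply, Matrix.mulVec, dotProduct, colm]

/-- Hölder: spectral vs trace norm. -/
lemma holder {s : ℝ} (hs : 0 ≤ s) {A B : Matrix (Fin m) (Fin n) ℝ} (hA : Cnt s A) :
    inner' A B ≤ s * traceNorm B := by
  rw [inner'_eq_sum_cols, traceNorm_eq, Finset.mul_sum]
  apply Finset.sum_le_sum
  intro j _
  calc ∑ i, (A *ᵥ colm (eigP B) j) i * (B *ᵥ colm (eigP B) j) i
      ≤ Real.sqrt (∑ i, (A *ᵥ colm (eigP B) j) i ^ 2) *
        Real.sqrt (∑ i, (B *ᵥ colm (eigP B) j) i ^ 2) := cs_sum _ _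
    _ ≤ (s * Real.sqrt (∑ i, (colm (eigP B) j) i ^ 2)) *
        Real.sqrt (∑ i, (B *ᵥ colm (eigP B) j) i ^ 2) := by
        apply mul_le_mul_of_nonneg_right (cnt_norm_mulVec hs hA _) (Real.sqrt_nonneg _)
    _ = s * Real.sqrt (eigL B j) := by
        rw [col_sumsq_eigP, col_sumsq_B_eigP]; simp


lemma dot_conjP (P C : Matrix (Fin n) (Fin n) ℝ) (x : Fin n → ℝ) :
    x ⬝ᵥ ((P * C * Pᵀ) *ᵥ x) = (Pᵀ *ᵥ x) ⬝ᵥ (C *ᵥ (Pᵀ *ᵥ x)) := by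
  rw [← Matrix.mulVec_mulVec, ← Matrix.mulVec_mulVec, ← dot_transpose_mulVec P x]

/-- Existence of a dual attaining matrix for the trace norm. -/
lemma attain (B : Matrix (Fin m) (Fin n) ℝ) :
    ∃ W : Matrix (Fin m) (Fin n) ℝ, Cnt 1 W ∧ inner' W B = traceNorm B ∧
      (∀ {k : ℕ} (C : Matrix (Fin k) (Fin m) ℝ), C * B = 0 → C * W = 0) ∧
      (∀ {k : ℕ} (C : Matrix (Fin n) (Fin k) ℝ), B * C = 0 → W * C = 0) := by
  classical
  set P := eigP B with hP
  set lam := eigL B with hlam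
  set gl : Fin n → ℝ := fun i => if lam i = 0 then 0 else (Real.sqrt (lam i))⁻¹ with hgl
  set g : Matrix (Fin n) (Fin n) ℝ := P * Matrix.diagonal gl * Pᵀ with hg
  refine ⟨B * g, ?_, ?_, ?_, ?_⟩
  · -- contraction
    intro x
    have hWtW : (B * g)ᵀ * (B * g) = P * Matrix.diagonal (fun i => gl i ^ 2 * lam i) * Pᵀ := by
      have : (B * g)ᵀ * (B * g) = gᵀ * (Bᵀ * B) * g := by
        rw [Matrix.transpose_mul]; simp only [Matrix.mul_assoc]
      rw [this, eig_spec B, hg]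
      have hgt : (P * Matrix.diagonal gl * Pᵀ)ᵀ = P * Matrix.diagonal gl * Pᵀ := by
        simp [Matrix.transpose_mul, Matrix.diagonal_transpose, Matrix.mul_assoc]
      rw [hgt]
      calc P * Matrix.diagonal gl * Pᵀ * (P * Matrix.diagonal lam * Pᵀ) *
            (P * Matrix.diagonal gl * Pᵀ)
          = P * Matrix.diagonal gl * (Pᵀ * P) * Matrix.diagonal lam * (Pᵀ * P) *
            Matrix.diagonal gl * Pᵀ := by simp only [Matrix.mul_assoc]
        _ = P * (Matrix.diagonal gl * Matrix.diagonal lam * Matrix.diagonal gl) * Pᵀ := by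
            rw [eigP_mul_self]
            simp only [Matrix.mul_one, Matrix.mul_assoc]
        _ = P * Matrix.diagonal (fun i => gl i ^ 2 * lam i) * Pᵀ := by
            rw [Matrix.diagonal_mul_diagonal, Matrix.diagonal_mul_diagonal]
            congr 1
            · congr 1
              funext i
              ring
    rw [sumsq_mulVec, hWtW, dot_conjP]
    set y := Pᵀ *ᵥ x with hy
    have h1 : y ⬝ᵥ (Matrix.diagonal (fun i => gl i ^ 2 * lam i) *ᵥ y)
        = ∑ i, (gl i ^ 2 * lam i) * y i ^ 2 := by
      simp [dotProduct, Matrix.mulVec_diagonal]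
      refine Finset.sum_congr rfl fun i _ => ?_
      ring
    rw [h1]
    have h2 : ∑ i, (gl i ^ 2 * lam i) * y i ^ 2 ≤ ∑ i, y i ^ 2 := by
      apply Finset.sum_le_sum
      intro i _
      have : gl i ^ 2 * lam i ≤ 1 := by
        by_cases hli : lam i = 0
        · simp [hgl, hli]
        · have hpos : 0 < lam i := lt_of_le_of_ne (eigL_nonneg B i) (Ne.symm hli)
          simp only [hgl, if_neg hli]
          rw [← Real.sqrt_inv]
          rw [Real.sq_sqrt (by positivity)]
          rw [inv_mul_cancel₀ hli]
      nlinarith [sq_nonneg (y i)]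
    have h3 : ∑ i, y i ^ 2 = ∑ j, x j ^ 2 := by
      have : ∑ i, y i ^ 2 = x ⬝ᵥ ((P * Pᵀ) *ᵥ x) := by
        rw [hy]
        have := sumsq_mulVec Pᵀ x
        rw [Matrix.transpose_transpose] at this
        exact this
      rw [this, self_mul_eigP]
      simp [dotProduct, pow_two]
    rw [h3] at h2
    simpa using h2
  · -- attains trace norm
    rw [inner'_eq_trace]
    have : (B * g)ᵀ * B = gᵀ * (Bᵀ * B) := by
      rw [Matrix.transpose_mul]; simp only [Matrix.mul_assoc]
    rw [this]
    have hgt : gᵀ = P * Matrix.diagonal gl * Pᵀ := by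
      rw [hg]
      simp [Matrix.transpose_mul, Matrix.diagonal_transpose, Matrix.mul_assoc]
    rw [hgt, eig_spec B]
    have : P * Matrix.diagonal gl * Pᵀ * (P * Matrix.diagonal lam * Pᵀ)
        = P * (Matrix.diagonal gl * Matrix.diagonal lam) * Pᵀ := by
      calc P * Matrix.diagonal gl * Pᵀ * (P * Matrix.diagonal lam * Pᵀ)
          = P * Matrix.diagonal gl * (Pᵀ * P) * Matrix.diagonal lam * Pᵀ := by
            simp only [Matrix.mul_assoc]
        _ = _ := by rw [eigP_mul_self]; simp only [Matrix.mul_one, Matrix.mul_assoc]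
    rw [this, Matrix.trace_mul_comm, ← Matrix.mul_assoc, eigP_mul_self, Matrix.one_mul,
      Matrix.diagonal_mul_diagonal, Matrix.trace_diagonal, traceNorm_eq]
    refine Finset.sum_congr rfl fun i _ => ?_
    show gl i * lam i = Real.sqrt (lam i)
    by_cases hli : lam i = 0
    · simp [hgl, hli]
    · have hpos : 0 < lam i := lt_of_le_of_ne (eigL_nonneg B i) (Ne.symm hli)
      have hs : Real.sqrt (lam i) ≠ 0 := ne_of_gt (Real.sqrt_pos.mpr hpos)
      have hms : Real.sqrt (lam i) * Real.sqrt (lam i) = lam i :=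
        Real.mul_self_sqrt (le_of_lt hpos)
      calc gl i * lam i = (Real.sqrt (lam i))⁻¹ * (Real.sqrt (lam i) * Real.sqrt (lam i)) := by
            rw [hms]; simp [hgl, if_neg hli]
        _ = Real.sqrt (lam i) := by rw [← mul_assoc, inv_mul_cancel₀ hs, one_mul]
  · intro k C hC
    rw [← Matrix.mul_assoc, hC, Matrix.zero_mul]
  · intro k C hC
    have hAC : (Bᵀ * B) * C = 0 := by
      rw [Matrix.mul_assoc, hC, Matrix.mul_zero]
    have hDC : Matrix.diagonal lam * (Pᵀ * C) = 0 := by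
      have h1 : Pᵀ * ((Bᵀ * B) * C) = 0 := by rw [hAC, Matrix.mul_zero]
      rw [eig_spec B] at h1
      calc Matrix.diagonal lam * (Pᵀ * C)
          = (Pᵀ * P) * Matrix.diagonal lam * (Pᵀ * C) := by rw [eigP_mul_self]; simp
        _ = Pᵀ * (P * Matrix.diagonal lam * Pᵀ * C) := by simp only [Matrix.mul_assoc]
        _ = 0 := h1
    have hglC : Matrix.diagonal gl * (Pᵀ * C) = 0 := by
      ext i j
      have h := congrArg (fun M => M i j) hDC
      simp only [Matrix.diagonal_mul, Matrix.zero_apply] at h ⊢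
      by_cases hli : lam i = 0
      · simp [hgl, hli]
      · have h3 : (Pᵀ * C) i j = 0 := by
          rcases mul_eq_zero.mp h with h'|h'
          · exact absurd h' hli
          · exact h'
        simp [h3]
    have : (B * g) * C = 0 := by
      rw [hg]
      calc B * (P * Matrix.diagonal gl * Pᵀ) * C
          = B * P * (Matrix.diagonal gl * (Pᵀ * C)) := by simp only [Matrix.mul_assoc]
        _ = 0 := by rw [hglC, Matrix.mul_zero]
    exact this


lemma spec_cnt {s : ℝ} {A : Matrix (Fin m) (Fin n) ℝ} (h : spec A ≤ s) : Cnt s A := by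
  have hs : 0 ≤ s := le_trans (norm_nonneg _) h
  intro x
  set T := LinearMap.toContinuousLinearMap (Matrix.toEuclideanLin A) with hT
  set y : EuclideanSpace ℝ (Fin n) := (WithLp.equiv 2 (Fin n → ℝ)).symm x with hy
  have h1 : ‖T y‖ ≤ s * ‖y‖ := by
    calc ‖T y‖ ≤ ‖T‖ * ‖y‖ := T.le_opNorm y
      _ ≤ s * ‖y‖ := mul_le_mul_of_nonneg_right h (norm_nonneg y)
  have hTy : T y = (WithLp.equiv 2 (Fin m → ℝ)).symm (A *ᵥ x) := by
    rw [hT, hy]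
    simp only [LinearMap.coe_toContinuousLinearMap']
    exact Matrix.toEuclideanLin_toLp A x
  have hnTy : ‖T y‖ = Real.sqrt (∑ i, (A *ᵥ x) i ^ 2) := by
    rw [hTy, EuclideanSpace.norm_eq]
    congr 1
    refine Finset.sum_congr rfl fun i _ => ?_
    rw [WithLp.equiv_symm_apply, PiLp.toLp_apply]
    rw [Real.norm_eq_abs, sq_abs]
  have hny : ‖y‖ = Real.sqrt (∑ j, x j ^ 2) := by
    rw [hy, EuclideanSpace.norm_eq]
    congr 1
    refine Finset.sum_congr rfl fun j _ => ?_
    rw [WithLp.equiv_symm_apply, PiLp.toLp_apply]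
    rw [Real.norm_eq_abs, sq_abs]
  rw [hnTy, hny] at h1
  have h2 : Real.sqrt (∑ i, (A *ᵥ x) i ^ 2) ^ 2 ≤ (s * Real.sqrt (∑ j, x j ^ 2)) ^ 2 := by
    apply pow_le_pow_left₀ (Real.sqrt_nonneg _) h1
  rw [Real.sq_sqrt (Finset.sum_nonneg fun i _ => sq_nonneg _)] at h2
  rw [mul_pow, Real.sq_sqrt (Finset.sum_nonneg fun j _ => sq_nonneg _)] at h2
  exact h2

lemma traceNorm_triangle (A B : Matrix (Fin m) (Fin n) ℝ) :
    traceNorm (A + B) ≤ traceNorm A + traceNorm B := by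
  obtain ⟨W, hW1, hW2, -, -⟩ := attain (A + B)
  rw [← hW2, inner'_add_right]
  have h1 := holder (s := 1) zero_le_one hW1 (B := A)
  have h2 := holder (s := 1) zero_le_one hW1 (B := B)
  rw [one_mul] at h1 h2
  exact add_le_add h1 h2

lemma traceNorm_zero : traceNorm (0 : Matrix (Fin m) (Fin n) ℝ) = 0 := by
  obtain ⟨W, hW1, hW2, -, -⟩ := attain (0 : Matrix (Fin m) (Fin n) ℝ)
  rw [← hW2, inner'_zero_right]

/-- outer product -/
def outer (x : Fin m → ℝ) (y : Fin n → ℝ) : Matrix (Fin m) (Fin n) ℝ :=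
  Matrix.of fun i j => x i * y j

lemma inner'_outer (Z : Matrix (Fin m) (Fin n) ℝ) (x : Fin m → ℝ) (y : Fin n → ℝ) :
    inner' Z (outer x y) = x ⬝ᵥ (Z *ᵥ y) := by
  simp only [inner', outer, Matrix.of_apply, dotProduct, Matrix.mulVec,
    Finset.mul_sum]
  refine Finset.sum_congr rfl fun i _ => Finset.sum_congr rfl fun j _ => ?_
  ring

lemma traceNorm_outer_le (x : Fin m → ℝ) (y : Fin n → ℝ) :
    traceNorm (outer x y) ≤ Real.sqrt (∑ i, x i ^ 2) * Real.sqrt (∑ j, y j ^ 2) := by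
  obtain ⟨W, hW1, hW2, -, -⟩ := attain (outer x y)
  rw [← hW2, inner'_outer]
  calc x ⬝ᵥ (W *ᵥ y) ≤ Real.sqrt (∑ i, x i ^ 2) * Real.sqrt (∑ i, (W *ᵥ y) i ^ 2) := by
        simpa [dotProduct] using cs_sum x (W *ᵥ y)
    _ ≤ Real.sqrt (∑ i, x i ^ 2) * (1 * Real.sqrt (∑ j, y j ^ 2)) :=
        mul_le_mul_of_nonneg_left (cnt_norm_mulVec zero_le_one hW1 y) (Real.sqrt_nonneg _)
    _ = Real.sqrt (∑ i, x i ^ 2) * Real.sqrt (∑ j, y j ^ 2) := by ring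

lemma cnt_UV_W {W : Matrix (Fin m) (Fin n) ℝ} {U : Matrix (Fin m) (Fin r) ℝ}
    {V : Matrix (Fin n) (Fin r) ℝ} (hU : Uᵀ * U = 1) (hV : Vᵀ * V = 1)
    (hUW : Uᵀ * W = 0) (hWV : W * V = 0) (hW : Cnt 1 W) : Cnt 1 (U * Vᵀ + W) := by
  intro x
  have hMtM : (U * Vᵀ + W)ᵀ * (U * Vᵀ + W) = V * Vᵀ + Wᵀ * W := by
    have hWtU : Wᵀ * U = 0 := by
      have := congrArg Matrix.transpose hUW
      simpa [Matrix.transpose_mul] using this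
    rw [Matrix.transpose_add, Matrix.transpose_mul, Matrix.transpose_transpose]
    rw [Matrix.add_mul, Matrix.mul_add, Matrix.mul_add]
    have e1 : V * Uᵀ * W = V * (Uᵀ * W) := by rw [Matrix.mul_assoc]
    have e2 : Wᵀ * (U * Vᵀ) = (Wᵀ * U) * Vᵀ := by rw [Matrix.mul_assoc]
    rw [e1, hUW, e2, hWtU, Matrix.mul_zero, Matrix.zero_mul]
    have e3 : V * Uᵀ * (U * Vᵀ) = V * (Uᵀ * U) * Vᵀ := by simp only [Matrix.mul_assoc]
    rw [e3, hU]
    simp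
  rw [sumsq_mulVec, hMtM]
  have hsplit : x ⬝ᵥ ((V * Vᵀ + Wᵀ * W) *ᵥ x)
      = x ⬝ᵥ ((V * Vᵀ) *ᵥ x) + x ⬝ᵥ ((Wᵀ * W) *ᵥ x) := by
    rw [Matrix.add_mulVec, dotProduct_add]
  have hWpart : x ⬝ᵥ ((Wᵀ * W) *ᵥ x) = ∑ i, (W *ᵥ x) i ^ 2 := (sumsq_mulVec W x).symm
  have hVpart : x ⬝ᵥ ((V * Vᵀ) *ᵥ x) = ∑ i, (Vᵀ *ᵥ x) i ^ 2 := by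
    have := sumsq_mulVec Vᵀ x
    rw [Matrix.transpose_transpose] at this
    exact this.symm
  set z := (V * Vᵀ) *ᵥ x with hz
  have hWx : W *ᵥ x = W *ᵥ (x - z) := by
    have h0 : W *ᵥ z = 0 := by
      rw [hz, Matrix.mulVec_mulVec, ← Matrix.mul_assoc, hWV, Matrix.zero_mul,
        Matrix.zero_mulVec]
    rw [Matrix.mulVec_sub, h0, sub_zero]
  have hzz : z ⬝ᵥ z = x ⬝ᵥ z := by
    have h1 : z ⬝ᵥ z = ∑ i, ((V * Vᵀ) *ᵥ x) i ^ 2 := by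
      simp [hz, dotProduct, pow_two]
    rw [h1, sumsq_mulVec]
    have h2 : (V * Vᵀ)ᵀ * (V * Vᵀ) = V * Vᵀ := by
      rw [Matrix.transpose_mul, Matrix.transpose_transpose]
      calc V * Vᵀ * (V * Vᵀ) = V * (Vᵀ * V) * Vᵀ := by simp only [Matrix.mul_assoc]
        _ = V * Vᵀ := by rw [hV]; simp
    rw [h2]
  have hWbound : ∑ i, (W *ᵥ x) i ^ 2 ≤ ∑ j, x j ^ 2 - x ⬝ᵥ z := by
    rw [hWx]
    have := hW (x - z)
    have hsum : ∑ j, (x - z) j ^ 2 = ∑ j, x j ^ 2 - x ⬝ᵥ z := by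
      have e : ∑ j, (x - z) j ^ 2 = (x - z) ⬝ᵥ (x - z) := by
        simp [dotProduct, pow_two]
      rw [e, dotProduct_sub, sub_dotProduct, sub_dotProduct, hzz]
      have exx : x ⬝ᵥ x = ∑ j, x j ^ 2 := by simp [dotProduct, pow_two]
      have hcomm : z ⬝ᵥ x = x ⬝ᵥ z := dotProduct_comm z x
      rw [exx, hcomm]
      ring
    calc ∑ i, (W *ᵥ (x - z)) i ^ 2 ≤ 1 ^ 2 * ∑ j, (x - z) j ^ 2 := this
      _ = ∑ j, x j ^ 2 - x ⬝ᵥ z := by rw [hsum]; ring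
  have hVz : x ⬝ᵥ ((V * Vᵀ) *ᵥ x) = x ⬝ᵥ z := rfl
  rw [hsplit, hWpart, hVz]
  have := hWbound
  nlinarith [hWbound]


/-! ### l1 / linf / POmega lemmas -/

lemma l1_nonneg (M : Matrix (Fin m) (Fin n) ℝ) : 0 ≤ l1 M :=
  Finset.sum_nonneg fun i _ => Finset.sum_nonneg fun j _ => abs_nonneg _

lemma abs_le_linf (M : Matrix (Fin m) (Fin n) ℝ) (i : Fin m) (j : Fin n) :
    |M i j| ≤ linf M := by
  have h1 : |M i j| ≤ ⨆ j', |M i j'| :=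
    le_ciSup (f := fun j' => |M i j'|) (Set.Finite.bddAbove (Set.finite_range _)) j
  have h2 : (⨆ j', |M i j'|) ≤ ⨆ i', ⨆ j', |M i' j'| :=
    le_ciSup (f := fun i' => ⨆ j', |M i' j'|) (Set.Finite.bddAbove (Set.finite_range _)) i
  exact h1.trans h2

lemma holder_l1 (A B : Matrix (Fin m) (Fin n) ℝ) : inner' A B ≤ linf A * l1 B := by
  rw [l1, Finset.mul_sum]
  apply Finset.sum_le_sum
  intro i _
  rw [Finset.mul_sum]
  apply Finset.sum_le_sum
  intro j _
  calc A i j * B i j ≤ |A i j * B i j| := le_abs_self _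
    _ = |A i j| * |B i j| := abs_mul _ _
    _ ≤ linf A * |B i j| := mul_le_mul_of_nonneg_right (abs_le_linf A i j) (abs_nonneg _)

lemma pom_self (X : Matrix (Fin m) (Fin n) ℝ) : POmega X X = X := by
  ext i j
  simp only [POmega, Matrix.of_apply]
  by_cases h : X i j = 0 <;> simp [h]

lemma pom_sub (X A B : Matrix (Fin m) (Fin n) ℝ) :
    POmega X (A - B) = POmega X A - POmega X B := by
  ext i j
  simp only [POmega, Matrix.of_apply, Matrix.sub_apply]
  by_cases h : X i j = 0 <;> simp [h]

lemma l1_split (X M : Matrix (Fin m) (Fin n) ℝ) :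
    l1 M = l1 (POmega X M) + l1 (M - POmega X M) := by
  simp only [l1, ← Finset.sum_add_distrib]
  refine Finset.sum_congr rfl fun i _ => Finset.sum_congr rfl fun j _ => ?_
  simp only [POmega, Matrix.of_apply, Matrix.sub_apply]
  by_cases h : X i j = 0 <;> simp [h]

lemma inner'_pom (X Q M : Matrix (Fin m) (Fin n) ℝ) :
    inner' Q (M - POmega X M) = inner' (Q - POmega X Q) (M - POmega X M) := by
  simp only [inner', POmega, Matrix.of_apply, Matrix.sub_apply]
  refine Finset.sum_congr rfl fun i _ => Finset.sum_congr rfl fun j _ => ?_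
  by_cases h : X i j = 0 <;> simp [h]


lemma sq_le_one_of_le_sqrt {t : ℝ} (ht : 0 ≤ t) (h : t ≤ Real.sqrt t) : t ≤ 1 := by
  nlinarith [Real.sq_sqrt ht, Real.sqrt_nonneg t]

lemma vec_eq_of_dot {a b : Fin k → ℝ} (hb : ∑ i, b i ^ 2 = 1) (ha : ∑ i, a i ^ 2 ≤ 1)
    (hab : ∑ i, b i * a i = 1) : a = b := by
  have hexp : ∑ i, (a i - b i) ^ 2
      = ∑ i, a i ^ 2 - 2 * ∑ i, b i * a i + ∑ i, b i ^ 2 := by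
    have hterm : ∀ i, (a i - b i) ^ 2 = a i ^ 2 - 2 * (b i * a i) + b i ^ 2 := fun i => by ring
    simp only [hterm]
    rw [Finset.sum_add_distrib, Finset.sum_sub_distrib, ← Finset.mul_sum]
  have h0 : ∑ i, (a i - b i) ^ 2 ≤ 0 := by rw [hexp, hab, hb]; linarith
  have h1 : ∑ i, (a i - b i) ^ 2 = 0 :=
    le_antisymm h0 (Finset.sum_nonneg fun i _ => sq_nonneg _)
  funext i
  have h2 := (Finset.sum_eq_zero_iff_of_nonneg (fun i _ => sq_nonneg _)).mp h1 i
    (Finset.mem_univ i)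
  have h3 : a i - b i = 0 := by
    have := sq_nonneg (a i - b i)
    nlinarith
  linarith


lemma cnt_zero : Cnt 1 (0 : Matrix (Fin m) (Fin n) ℝ) := by
  intro x
  simp only [Matrix.zero_mulVec, Pi.zero_apply, one_pow, one_mul]
  have : ∑ _i : Fin m, (0:ℝ) ^ 2 = 0 := by simp
  rw [this]
  exact Finset.sum_nonneg fun j _ => sq_nonneg _

lemma cnt_UV {U : Matrix (Fin m) (Fin r) ℝ} {V : Matrix (Fin n) (Fin r) ℝ}
    (hU : Uᵀ * U = 1) (hV : Vᵀ * V = 1) : Cnt 1 (U * Vᵀ) := by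
  have h := cnt_UV_W (W := 0) hU hV (by simp) (by simp) cnt_zero
  simpa using h

lemma col_mul (M : Matrix (Fin m) (Fin n) ℝ) (N : Matrix (Fin n) (Fin k) ℝ) (j : Fin k) :
    colm (M * N) j = M *ᵥ colm N j := by
  funext i
  simp [colm, Matrix.mul_apply, Matrix.mulVec, dotProduct]

lemma col_sumsq_one {U : Matrix (Fin m) (Fin r) ℝ} (hU : Uᵀ * U = 1) (i : Fin r) :
    ∑ a, colm U i a ^ 2 = 1 := by
  have h := congrArg (fun M => M i i) hU
  simpa [Matrix.mul_apply, Matrix.one_apply, colm, pow_two] using h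

lemma dot_bound {Z : Matrix (Fin m) (Fin n) ℝ} (hZ : Cnt 1 Z) {x : Fin m → ℝ}
    {y : Fin n → ℝ} (hx : ∑ i, x i ^ 2 = 1) (hy : ∑ j, y j ^ 2 = 1) :
    x ⬝ᵥ (Z *ᵥ y) ≤ 1 := by
  calc x ⬝ᵥ (Z *ᵥ y) ≤ Real.sqrt (∑ i, x i ^ 2) * Real.sqrt (∑ i, (Z *ᵥ y) i ^ 2) := by
        simpa [dotProduct] using cs_sum x (Z *ᵥ y)
    _ ≤ Real.sqrt (∑ i, x i ^ 2) * (1 * Real.sqrt (∑ j, y j ^ 2)) :=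
        mul_le_mul_of_nonneg_left (cnt_norm_mulVec zero_le_one hZ y) (Real.sqrt_nonneg _)
    _ = 1 := by rw [hx, hy]; simp

lemma inner'_U_sigma_V (Z : Matrix (Fin m) (Fin n) ℝ) (U : Matrix (Fin m) (Fin r) ℝ)
    (σ : Fin r → ℝ) (V : Matrix (Fin n) (Fin r) ℝ) :
    inner' Z (U * Matrix.diagonal σ * Vᵀ) = ∑ i, σ i * (colm U i ⬝ᵥ (Z *ᵥ colm V i)) := by
  rw [inner'_eq_trace]
  have h1 : Zᵀ * (U * Matrix.diagonal σ * Vᵀ) = (Zᵀ * U) * Matrix.diagonal σ * Vᵀ := by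
    simp only [Matrix.mul_assoc]
  rw [h1, Matrix.trace_mul_cycle]
  have h2 : (Vᵀ * (Zᵀ * U) * Matrix.diagonal σ).trace
      = ∑ i, (Vᵀ * (Zᵀ * U)) i i * σ i := by
    simp [Matrix.trace, Matrix.diag, Matrix.mul_diagonal]
  rw [h2]
  refine Finset.sum_congr rfl fun i _ => ?_
  have hent : (Vᵀ * (Zᵀ * U)) i i = colm U i ⬝ᵥ (Z *ᵥ colm V i) := by
    simp only [Matrix.mul_apply, Matrix.transpose_apply, dotProduct, Matrix.mulVec,
      colm, Finset.mul_sum, Finset.sum_mul]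
    rw [Finset.sum_comm]
    refine Finset.sum_congr rfl fun a _ => ?_
    refine Finset.sum_congr rfl fun b _ => ?_
    ring
  rw [hent, mul_comm]

lemma PT_selfadj (U : Matrix (Fin m) (Fin r) ℝ) (V : Matrix (Fin n) (Fin r) ℝ)
    (A B : Matrix (Fin m) (Fin n) ℝ) :
    inner' (PT U V A) B = inner' A (PT U V B) := by
  simp only [PT, inner'_eq_trace]
  rw [Matrix.transpose_sub, Matrix.transpose_add]
  simp only [Matrix.transpose_mul, Matrix.transpose_transpose]
  rw [Matrix.sub_mul, Matrix.add_mul, Matrix.mul_sub, Matrix.mul_add]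
  rw [Matrix.trace_sub, Matrix.trace_add, Matrix.trace_sub, Matrix.trace_add]
  congr 1
  · congr 1
    · congr 1
      simp only [Matrix.mul_assoc]
    · rw [show (V * Vᵀ) * Aᵀ * B = (V * Vᵀ) * (Aᵀ * B) by simp only [Matrix.mul_assoc]]
      rw [Matrix.trace_mul_comm]
      simp only [Matrix.mul_assoc]
  · rw [show (V * Vᵀ) * (Aᵀ * (U * Uᵀ)) * B = (V * Vᵀ) * (Aᵀ * (U * Uᵀ) * B) by
      simp only [Matrix.mul_assoc]]
    rw [Matrix.trace_mul_comm]
    simp only [Matrix.mul_assoc]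

lemma PT_of_perp {U : Matrix (Fin m) (Fin r) ℝ} {V : Matrix (Fin n) (Fin r) ℝ}
    {M : Matrix (Fin m) (Fin n) ℝ} (h1 : Uᵀ * M = 0) (h2 : M * V = 0) :
    PT U V M = 0 := by
  simp only [PT]
  have e1 : U * Uᵀ * M = U * (Uᵀ * M) := by simp only [Matrix.mul_assoc]
  have e2 : M * (V * Vᵀ) = (M * V) * Vᵀ := by simp only [Matrix.mul_assoc]
  have e3 : U * Uᵀ * M * (V * Vᵀ) = U * (Uᵀ * M) * (V * Vᵀ) := by simp only [Matrix.mul_assoc]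
  rw [e3, e1, e2, h1, h2]
  simp

lemma perp_U {U : Matrix (Fin m) (Fin r) ℝ} {V : Matrix (Fin n) (Fin r) ℝ}
    (hU : Uᵀ * U = 1) (M : Matrix (Fin m) (Fin n) ℝ) :
    Uᵀ * (M - PT U V M) = 0 := by
  simp only [PT]
  rw [Matrix.mul_sub, Matrix.mul_sub, Matrix.mul_add]
  have e1 : Uᵀ * (U * Uᵀ * M) = (Uᵀ * U) * (Uᵀ * M) := by simp only [Matrix.mul_assoc]
  have e3 : Uᵀ * (U * Uᵀ * M * (V * Vᵀ)) = (Uᵀ * U) * (Uᵀ * (M * (V * Vᵀ))) := by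
    simp only [Matrix.mul_assoc]
  rw [e1, e3, hU]
  simp only [Matrix.one_mul]
  have e4 : Uᵀ * (M * (V * Vᵀ)) = Uᵀ * M * (V * Vᵀ) := by simp only [Matrix.mul_assoc]
  rw [e4]
  abel

lemma perp_V {U : Matrix (Fin m) (Fin r) ℝ} {V : Matrix (Fin n) (Fin r) ℝ}
    (hV : Vᵀ * V = 1) (M : Matrix (Fin m) (Fin n) ℝ) :
    (M - PT U V M) * V = 0 := by
  simp only [PT]
  rw [Matrix.sub_mul, Matrix.sub_mul, Matrix.add_mul]
  have e2 : M * (V * Vᵀ) * V = M * (V * (Vᵀ * V)) := by simp only [Matrix.mul_assoc]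
  have e3 : U * Uᵀ * M * (V * Vᵀ) * V = U * (Uᵀ * (M * (V * (Vᵀ * V)))) := by
    simp only [Matrix.mul_assoc]
  rw [e2, e3, hV]
  simp only [Matrix.mul_one]
  have e5 : U * Uᵀ * M * V = U * (Uᵀ * (M * V)) := by simp only [Matrix.mul_assoc]
  rw [e5]
  abel

lemma PT_perp_zero {U : Matrix (Fin m) (Fin r) ℝ} {V : Matrix (Fin n) (Fin r) ℝ}
    (hU : Uᵀ * U = 1) (hV : Vᵀ * V = 1) (M : Matrix (Fin m) (Fin n) ℝ) :
    PT U V (M - PT U V M) = 0 :=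
  PT_of_perp (perp_U hU M) (perp_V hV M)

end Aux

open Aux

set_option maxHeartbeats 1600000 in
/-- approximate-subgradient error decomposition. -/
theorem approx_subgradient_decomposition {m n r : ℕ} (lam c : ℝ)
    (hlam : 0 < lam) (hc : 1 < c)
    (Xs Xl : Matrix (Fin m) (Fin n) ℝ)
    (U : Matrix (Fin m) (Fin r) ℝ) (V : Matrix (Fin n) (Fin r) ℝ) (σ : Fin r → ℝ)
    (hσ : ∀ i, 0 < σ i) (hU : Uᵀ * U = 1) (hV : Vᵀ * V = 1)
    (hXl : Xl = U * Matrix.diagonal σ * Vᵀ)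
    (Q : Matrix (Fin m) (Fin n) ℝ)
    (hQ1 : ∀ X, lam * l1 Xs + inner' Q (X - Xs) ≤ lam * l1 X)
    (hQ2 : ∀ X, traceNorm Xl + inner' Q (X - Xl) ≤ traceNorm X)
    (hQ3 : linf (Q - POmega Xs Q) ≤ lam / c)
    (hQ4 : spec (Q - PT U V Q) ≤ 1 / c) :
    ∀ XS XL : Matrix (Fin m) (Fin n) ℝ,
      inner' Q (XS + XL - Xs - Xl)
        + (1 - 1 / c) * (lam * l1 ((XS - Xs) - POmega Xs (XS - Xs))
            + traceNorm ((XL - Xl) - PT U V (XL - Xl)))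
      ≤ lam * l1 XS + traceNorm XL - lam * l1 Xs - traceNorm Xl := by
  intro XS XL
  have hc0 : (0 : ℝ) < c := lt_trans one_pos hc
  have hinvc : (0 : ℝ) ≤ 1 / c := by positivity
  -- ########## ℓ1 part ##########
  set Ds := XS - Xs with hDs
  set Rs := Ds - POmega Xs Ds with hRs
  have hpom_eq : POmega Xs XS - Xs = POmega Xs Ds := by
    rw [hDs, pom_sub, pom_self]
  have hXSr : XS - POmega Xs XS = Rs := by
    rw [hRs, hDs, pom_sub, pom_self]
    abel
  have hsplit1 : l1 XS = l1 (POmega Xs XS) + l1 Rs := by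
    rw [← hXSr]
    exact l1_split Xs XS
  have h3l := hQ1 (POmega Xs XS)
  rw [hpom_eq] at h3l
  have hQDs : inner' Q Ds = inner' Q (POmega Xs Ds) + inner' Q Rs := by
    have h := inner'_sub_right Q Ds (POmega Xs Ds)
    rw [hRs, h]
    ring
  have hQRs : inner' Q Rs ≤ lam / c * l1 Rs := by
    have h1 : inner' Q Rs = inner' (Q - POmega Xs Q) Rs := by
      rw [hRs]
      exact inner'_pom Xs Q Ds
    rw [h1]
    calc inner' (Q - POmega Xs Q) Rs ≤ linf (Q - POmega Xs Q) * l1 Rs := holder_l1 _ _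
      _ ≤ lam / c * l1 Rs := mul_le_mul_of_nonneg_right hQ3 (l1_nonneg Rs)
  have hl1part : lam * l1 Xs + inner' Q Ds + (lam * l1 Rs - lam / c * l1 Rs)
      ≤ lam * l1 XS := by
    have e1 : lam * l1 XS = lam * l1 (POmega Xs XS) + lam * l1 Rs := by
      rw [hsplit1]; ring
    linarith [h3l, hQDs, hQRs]
  -- ########## nuclear part ##########
  set Dl := XL - Xl with hDl
  set N := Dl - PT U V Dl with hN
  have hNU : Uᵀ * N = 0 := by rw [hN]; exact perp_U hU Dl
  have hNV : N * V = 0 := by rw [hN]; exact perp_V hV Dl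
  obtain ⟨W, hWc, hWN, hWleft, hWright⟩ := attain N
  have hUW : Uᵀ * W = 0 := hWleft Uᵀ hNU
  have hWV : W * V = 0 := hWright V hNV
  have hcnt : Cnt 1 (U * Vᵀ + W) := cnt_UV_W hU hV hUW hWV hWc
  have hXL_ge : inner' (U * Vᵀ + W) XL ≤ traceNorm XL := by
    have h := holder zero_le_one hcnt (B := XL)
    simpa using h
  have hXLdec : XL = Xl + Dl := by rw [hDl]; abel
  have hWXl : inner' W Xl = 0 := by
    rw [hXl, inner'_U_sigma_V]
    apply Finset.sum_eq_zero
    intro i _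
    have h1 : W *ᵥ colm V i = colm (W * V) i := (col_mul W V i).symm
    rw [h1, hWV]
    simp [colm, dotProduct]
  have hUVXl : inner' (U * Vᵀ) Xl = ∑ i, σ i := by
    rw [hXl, inner'_U_sigma_V]
    refine Finset.sum_congr rfl fun i _ => ?_
    have h1 : (U * Vᵀ) *ᵥ colm V i = colm (U * Vᵀ * V) i := (col_mul _ V i).symm
    have h2 : U * Vᵀ * V = U := by rw [Matrix.mul_assoc, hV, Matrix.mul_one]
    rw [h1, h2]
    have h3 : colm U i ⬝ᵥ colm U i = 1 := by
      have h4 := col_sumsq_one hU i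
      simpa [dotProduct, pow_two] using h4
    rw [h3, mul_one]
  have hPTW : PT U V W = 0 := PT_of_perp hUW hWV
  have hWDl : inner' W Dl = traceNorm N := by
    have hdec : inner' W Dl = inner' W (PT U V Dl) + inner' W N := by
      have h := inner'_sub_right W Dl (PT U V Dl)
      rw [hN, h]
      ring
    have h0 : inner' W (PT U V Dl) = 0 := by
      rw [← PT_selfadj, hPTW, inner'_comm, inner'_zero_right]
    rw [hdec, h0, hWN]
    ring
  -- Q is in the subdifferential: consequences
  have hQsub : ∀ M, inner' Q M ≤ traceNorm M := by
    intro M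
    have h := hQ2 (Xl + M)
    have e : Xl + M - Xl = M := by abel
    rw [e] at h
    have tri := traceNorm_triangle Xl M
    linarith
  have hdotQ : ∀ (x : Fin m → ℝ) (y : Fin n → ℝ),
      x ⬝ᵥ (Q *ᵥ y) ≤ Real.sqrt (∑ i, x i ^ 2) * Real.sqrt (∑ j, y j ^ 2) := by
    intro x y
    have h1 := hQsub (outer x y)
    rw [inner'_outer] at h1
    exact h1.trans (traceNorm_outer_le x y)
  have hQXl_ge : traceNorm Xl ≤ inner' Q Xl := by
    have h := hQ2 0
    rw [traceNorm_zero] at h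
    have e : inner' Q (0 - Xl) = 0 - inner' Q Xl := by
      rw [inner'_sub_right, inner'_zero_right]
    rw [e] at h
    linarith
  have hsum_le : ∑ i, σ i ≤ inner' Q Xl := by
    have h1 := holder zero_le_one (cnt_UV hU hV) (B := Xl)
    rw [hUVXl, one_mul] at h1
    linarith
  set d : Fin r → ℝ := fun i => colm U i ⬝ᵥ (Q *ᵥ colm V i) with hd
  have hQXl_sum : inner' Q Xl = ∑ i, σ i * d i := by rw [hXl, inner'_U_sigma_V]
  have hd_le : ∀ i, d i ≤ 1 := by
    intro i
    have h1 := hdotQ (colm U i) (colm V i)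
    rw [col_sumsq_one hU i, col_sumsq_one hV i] at h1
    simpa [hd] using h1
  have hd_eq : ∀ i, d i = 1 := by
    intro i
    by_contra hne
    have hlt : d i < 1 := lt_of_le_of_ne (hd_le i) hne
    have hsum2 : ∑ j, σ j * d j < ∑ j, σ j := by
      apply Finset.sum_lt_sum
      · intro j _
        exact mul_le_of_le_one_right (le_of_lt (hσ j)) (hd_le j)
      · exact ⟨i, Finset.mem_univ i, by nlinarith [hσ i]⟩
    rw [← hQXl_sum] at hsum2
    linarith
  have hQv : ∀ i, Q *ᵥ colm V i = colm U i := by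
    intro i
    apply vec_eq_of_dot (col_sumsq_one hU i)
    · have h1 := hdotQ (Q *ᵥ colm V i) (colm V i)
      rw [col_sumsq_one hV i] at h1
      have h2 : (Q *ᵥ colm V i) ⬝ᵥ (Q *ᵥ colm V i) = ∑ ii, (Q *ᵥ colm V i) ii ^ 2 := by
        simp [dotProduct, pow_two]
      rw [h2] at h1
      apply sq_le_one_of_le_sqrt (Finset.sum_nonneg fun ii _ => sq_nonneg _)
      simpa using h1
    · have h2 : ∑ ii, colm U i ii * (Q *ᵥ colm V i) ii = d i := by
        simp [hd, dotProduct]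
      rw [h2, hd_eq i]
  have hdotQt : ∀ (y : Fin m → ℝ) (x : Fin n → ℝ),
      x ⬝ᵥ (Qᵀ *ᵥ y) ≤ Real.sqrt (∑ j, x j ^ 2) * Real.sqrt (∑ i, y i ^ 2) := by
    intro y x
    rw [dotProduct_comm, dot_transpose_mulVec, mul_comm]
    exact hdotQ y x
  have hQtu : ∀ i, Qᵀ *ᵥ colm U i = colm V i := by
    intro i
    apply vec_eq_of_dot (col_sumsq_one hV i)
    · have h1 := hdotQt (colm U i) (Qᵀ *ᵥ colm U i)
      rw [col_sumsq_one hU i] at h1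
      have h2 : (Qᵀ *ᵥ colm U i) ⬝ᵥ (Qᵀ *ᵥ colm U i) = ∑ jj, (Qᵀ *ᵥ colm U i) jj ^ 2 := by
        simp [dotProduct, pow_two]
      rw [h2] at h1
      apply sq_le_one_of_le_sqrt (Finset.sum_nonneg fun jj _ => sq_nonneg _)
      simpa using h1
    · have h2 : ∑ jj, colm V i jj * (Qᵀ *ᵥ colm U i) jj
          = (Qᵀ *ᵥ colm U i) ⬝ᵥ colm V i := by
        simp [dotProduct, mul_comm]
      rw [h2, dot_transpose_mulVec]
      have h3 : colm U i ⬝ᵥ (Q *ᵥ colm V i) = d i := rfl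
      rw [h3, hd_eq i]
  have hQV : Q * V = U := by
    ext a b
    have h1 := congrFun (hQv b) a
    simpa [colm, Matrix.mul_apply, Matrix.mulVec, dotProduct] using h1
  have hQtU : Qᵀ * U = V := by
    ext a b
    have h1 := congrFun (hQtu b) a
    simpa [colm, Matrix.mul_apply, Matrix.mulVec, dotProduct] using h1
  have hUtQ : Uᵀ * Q = Vᵀ := by
    have h1 := congrArg Matrix.transpose hQtU
    rwa [Matrix.transpose_mul, Matrix.transpose_transpose] at h1
  have hPTQ : PT U V Q = U * Vᵀ := by
    show U * Uᵀ * Q + Q * (V * Vᵀ) - U * Uᵀ * Q * (V * Vᵀ) = U * Vᵀ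
    have e1 : U * Uᵀ * Q = U * (Uᵀ * Q) := by simp only [Matrix.mul_assoc]
    have e2 : Q * (V * Vᵀ) = (Q * V) * Vᵀ := by simp only [Matrix.mul_assoc]
    have e3 : U * Uᵀ * Q * (V * Vᵀ) = U * (Uᵀ * Q) * (V * Vᵀ) := by
      simp only [Matrix.mul_assoc]
    rw [e3, e1, e2, hUtQ, hQV]
    have e4 : U * Vᵀ * (V * Vᵀ) = U * (Vᵀ * V) * Vᵀ := by simp only [Matrix.mul_assoc]
    rw [e4, hV, Matrix.mul_one]
    abel
  have hPTN : PT U V N = 0 := by rw [hN]; exact PT_perp_zero hU hV Dl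
  have hQDl : inner' Q Dl = inner' (U * Vᵀ) Dl + inner' (Q - PT U V Q) N := by
    have h1 : inner' Q Dl = inner' Q (PT U V Dl) + inner' Q N := by
      have h := inner'_sub_right Q Dl (PT U V Dl)
      rw [hN, h]
      ring
    have h2 : inner' Q (PT U V Dl) = inner' (U * Vᵀ) Dl := by
      rw [← PT_selfadj, hPTQ]
    have h3 : inner' Q N = inner' (PT U V Q) N + inner' (Q - PT U V Q) N := by
      rw [inner'_sub_left Q (PT U V Q) N]
      ring
    have h4 : inner' (PT U V Q) N = 0 := by
      rw [PT_selfadj, hPTN, inner'_zero_right]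
    rw [h1, h2, h3, h4]
    ring
  have hQperpN : inner' (Q - PT U V Q) N ≤ 1 / c * traceNorm N :=
    holder hinvc (spec_cnt hQ4)
  have htrXl_le : traceNorm Xl ≤ ∑ i, σ i := by
    obtain ⟨W', hW'c, hW'e, -, -⟩ := attain Xl
    rw [← hW'e]
    nth_rewrite 1 [hXl]
    rw [inner'_U_sigma_V]
    apply Finset.sum_le_sum
    intro i _
    have hb := dot_bound hW'c (col_sumsq_one hU i) (col_sumsq_one hV i)
    have h5 := mul_le_mul_of_nonneg_left hb (le_of_lt (hσ i))
    simpa using h5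
  have hdecomp : inner' (U * Vᵀ + W) XL
      = inner' (U * Vᵀ) Xl + inner' W Xl + inner' (U * Vᵀ) Dl + inner' W Dl := by
    calc inner' (U * Vᵀ + W) XL = inner' (U * Vᵀ + W) (Xl + Dl) := by rw [← hXLdec]
      _ = _ := by
          rw [inner'_add_right (U * Vᵀ + W) Xl Dl, inner'_add_left (U * Vᵀ) W Xl,
            inner'_add_left (U * Vᵀ) W Dl]
          ring
  have hnuc : inner' Q Dl + (1 - 1 / c) * traceNorm N
      ≤ traceNorm XL - traceNorm Xl := by
    have hA : ∑ i, σ i + inner' (U * Vᵀ) Dl + traceNorm N ≤ traceNorm XL := by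
      rw [hdecomp] at hXL_ge
      linarith [hWXl, hUVXl, hWDl]
    have e : (1 - 1 / c) * traceNorm N = traceNorm N - 1 / c * traceNorm N := by ring
    linarith [hQDl, hQperpN, htrXl_le, hA]
  -- ########## assembly ##########
  have hsplitQ2 : inner' Q (XS + XL - Xs - Xl) = inner' Q Ds + inner' Q Dl := by
    have e : XS + XL - Xs - Xl = Ds + Dl := by rw [hDs, hDl]; abel
    rw [e, inner'_add_right Q Ds Dl]
  rw [hsplitQ2]
  have eexp : (1 - 1 / c) * (lam * l1 Rs + traceNorm N)
      = (lam * l1 Rs - lam / c * l1 Rs) + (1 - 1 / c) * traceNorm N := by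
    field_simp
  linarith [hl1part, hnuc, eexp]


end SLR
end
end
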